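/- For every n ∈ ℕ and every z ∈ ℕ with 0 ≤ z < 2^n, the modulus of the complex number Σ_{x=0}^{2^n-1} i^{w(x)} (-1)^{z·x} equals 2^{n/2} = √(2^n). -/

import Mathlib

open Finset

/-- Hamming weight of a natural number: number of 1s in its binary representation. -/
def hw (x : ℕ) : ℕ := (Nat.digits 2 x).sum

/-- The `j`-th bit of `z`, as a natural number in `{0,1}`. -/
def nbit (z j : ℕ) : ℕ := if z.testBit j then 1 else 0

/-- Partial bitwise dot product `∑_{j=0}^{n-1} z_j x_j`. -/
def ndot (n z x : ℕ) : ℕ := ∑ j ∈ Finset.range n, nbit z j * nbit x j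

lemma hw_rec (x : ℕ) : hw x = x % 2 + hw (x / 2) := by
  rcases Nat.eq_zero_or_pos x with h | h
  · simp [h, hw]
  · unfold hw
    rw [Nat.digits_def' (by norm_num : 1 < 2) h]
    simp

lemma nbit_succ (x j : ℕ) : nbit x (j + 1) = nbit (x / 2) j := by
  simp [nbit, Nat.testBit_add_one]

lemma hw_eq (n : ℕ) : ∀ x, x < 2 ^ n → hw x = ∑ j ∈ Finset.range n, nbit x j := by
  induction n with
  | zero => intro x hx; interval_cases x; simp [hw]
  | succ n ih =>
    intro x hx
    rw [Finset.sum_range_succ']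
    simp only [nbit_succ]
    rw [← ih (x / 2) (by omega), hw_rec x]
    have : nbit x 0 = x % 2 := by
      simp only [nbit, Nat.testBit_zero]
      rcases Nat.mod_two_eq_zero_or_one x with h | h <;> simp [h]
    rw [this]; ring

lemma key (n z : ℕ) :
    ‖∑ x ∈ Finset.range (2 ^ n), Complex.I ^ hw x * (-1) ^ ndot n z x‖ =
      Real.sqrt (2 ^ n) := by
  induction n generalizing z with
  | zero => simp [hw, ndot]
  | succ n ih =>
    have hsplit : (2 : ℕ) ^ (n + 1) = 2 ^ n + 2 ^ n := by ring
    rw [hsplit, Finset.sum_range_add]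
    -- rewrite each summand
    have hb : ∀ x < 2 ^ n, nbit x n = 0 := fun x hx => by
      simp [nbit, Nat.testBit_lt_two_pow hx]
    have h1 : ∀ x ∈ Finset.range (2 ^ n),
        Complex.I ^ hw x * (-1 : ℂ) ^ ndot (n + 1) z x
          = Complex.I ^ hw x * (-1) ^ ndot n z x := by
      intro x hx
      rw [Finset.mem_range] at hx
      have : ndot (n + 1) z x = ndot n z x := by
        rw [ndot, Finset.sum_range_succ, hb x hx]; simp [ndot]
      rw [this]
    have h2 : ∀ x ∈ Finset.range (2 ^ n),
        Complex.I ^ hw (2 ^ n + x) * (-1 : ℂ) ^ ndot (n + 1) z (2 ^ n + x)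
          = Complex.I ^ hw x * (-1) ^ ndot n z x * (Complex.I * (-1) ^ nbit z n) := by
      intro x hx
      rw [Finset.mem_range] at hx
      have hlow : ∀ j < n, nbit (2 ^ n + x) j = nbit x j := fun j hj => by
        simp [nbit, Nat.testBit_two_pow_add_gt hj]
      have hhigh : nbit (2 ^ n + x) n = 1 := by
        simp [nbit, Nat.testBit_two_pow_add_eq, Nat.testBit_lt_two_pow hx]
      have hhw : hw (2 ^ n + x) = hw x + 1 := by
        rw [hw_eq (n + 1) _ (by omega), hw_eq n x hx, Finset.sum_range_succ, hhigh]
        congr 1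
        exact Finset.sum_congr rfl fun j hj => hlow j (Finset.mem_range.mp hj)
      have hnd : ndot (n + 1) z (2 ^ n + x) = ndot n z x + nbit z n := by
        rw [ndot, Finset.sum_range_succ, hhigh, mul_one, ndot]
        congr 1
        exact Finset.sum_congr rfl fun j hj => by rw [hlow j (Finset.mem_range.mp hj)]
      rw [hhw, hnd, pow_add, pow_add]
      ring
    rw [Finset.sum_congr rfl h1, Finset.sum_congr rfl h2, ← Finset.sum_add_distrib]
    have h3 : ∀ x ∈ Finset.range (2 ^ n),
        Complex.I ^ hw x * (-1 : ℂ) ^ ndot n z x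
          + Complex.I ^ hw x * (-1) ^ ndot n z x * (Complex.I * (-1) ^ nbit z n)
          = Complex.I ^ hw x * (-1) ^ ndot n z x * (1 + Complex.I * (-1) ^ nbit z n) := by
      intro x _; ring
    rw [Finset.sum_congr rfl h3, ← Finset.sum_mul, norm_mul, ih z]
    have habs : ‖1 + Complex.I * (-1 : ℂ) ^ nbit z n‖ = Real.sqrt 2 := by
      have : nbit z n = 0 ∨ nbit z n = 1 := by unfold nbit; split <;> simp
      rcases this with h | h <;>
        · rw [h, Complex.norm_def, Complex.normSq_apply]
          norm_num
    rw [habs, ← Real.sqrt_mul (by positivity)]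
    congr 1

theorem stmt_5 (n : ℕ) (z : ℕ) (hz : z < 2 ^ n) :
    ‖∑ x ∈ Finset.range (2 ^ n), Complex.I ^ hw x * (-1) ^ ndot n z x‖ =
      Real.sqrt (2 ^ n) := by
  exact key n z
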